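/- Let F be a field of characteristic p > 2 and Vir the Virasoro algebra over F. If p does not divide m, then (ad L_m)^p = 0 as a linear operator on Vir; if p divides m, then (ad L_m)^p = ad L_{pm}. -/

import Mathlib

section Aux

variable {F : Type*} [Field F] {Vir : Type*} [LieRing Vir] [LieAlgebra F Vir]

lemma aux_key (L : ℤ → Vir) (c : Vir)
    (hc : ∀ x : Vir, ⁅c, x⁆ = 0)
    (hbracket : ∀ m n : ℤ, ⁅L m, L n⁆ =
      ((m - n : ℤ) : F) • L (m + n) +
        (if m + n = 0 then (2⁻¹ : F) * ((Ring.choose (m + 1) 3 : ℤ) : F)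
          else 0) • c)
    (m n : ℤ) (k : ℕ) :
    ((LieAlgebra.ad F Vir (L m)) ^ (k+1)) (L n) =
      (∏ j ∈ Finset.range (k+1), ((m - n - j*m : ℤ) : F)) • L (n + (k+1)*m) +
      ((∏ j ∈ Finset.range k, ((m - n - j*m : ℤ) : F)) *
        (if m + (n + k*m) = 0 then (2⁻¹ : F) * ((Ring.choose (m + 1) 3 : ℤ) : F)
          else 0)) • c := by
  have hLc : ⁅L m, c⁆ = 0 := by rw [← lie_skew, hc, neg_zero]
  induction k with
  | zero =>
    rw [pow_one, LieAlgebra.ad_apply, hbracket]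
    simp only [Finset.prod_range_one, Finset.prod_range_zero, Nat.cast_zero, zero_mul,
      sub_zero, zero_add, one_mul, add_zero]
    rw [add_comm n m]
  | succ k ih =>
    have e1 : m + (n + ((k:ℤ)+1)*m) = n + (((k+1:ℕ):ℤ)+1)*m := by push_cast; ring
    have e2 : m + (n + ((k+1:ℕ):ℤ)*m) = n + (((k+1:ℕ):ℤ)+1)*m := by push_cast; ring
    rw [pow_succ', Module.End.mul_apply, ih, map_add, map_smul, map_smul,
      LieAlgebra.ad_apply, LieAlgebra.ad_apply, hLc, smul_zero, add_zero, hbracket]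
    simp only [e1, e2]
    rw [smul_add, smul_smul, smul_smul]
    congr 1
    congr 1
    rw [Finset.prod_range_succ, Finset.prod_range_succ, Finset.prod_range_succ]
    push_cast
    ring

lemma aux_choose6 (z : ℤ) : (6:ℤ) * Ring.choose z 3 = z*(z-1)*(z-2) := by
  have h := Ring.descPochhammer_eq_factorial_smul_choose z 3
  rw [← Polynomial.eval_eq_smeval] at h
  simp [descPochhammer, Nat.factorial] at h
  linarith [h]

lemma aux_choose_zero (p : ℕ) (hp : p.Prime) (hp2 : 2 < p) [CharP F p]
    (m : ℤ) (h : (p:ℤ) ∣ m) :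
    ((Ring.choose ((p:ℤ)*m + 1) 3 : ℤ) : F) = 0 := by
  rw [CharP.intCast_eq_zero_iff F p]
  set C := Ring.choose ((p:ℤ)*m + 1) 3 with hC
  have h6 : (6:ℤ) * C = ((p:ℤ)*m + 1) * ((p:ℤ)*m) * ((p:ℤ)*m - 1) := by
    have := aux_choose6 ((p:ℤ)*m + 1); rw [← hC] at this; linarith [this]
  obtain ⟨k, rfl⟩ := h
  have hsq : (p:ℤ)*(p:ℤ) ∣ 6 * C := by
    rw [h6]
    exact ⟨((p:ℤ)*((p:ℤ)*k)+1)*k*((p:ℤ)*((p:ℤ)*k)-1), by ring⟩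
  by_cases h3 : p = 3
  · subst h3
    obtain ⟨t, ht⟩ := hsq
    have hd : ((3:ℕ):ℤ) ∣ 2 * C := ⟨t, by push_cast at ht ⊢; linarith⟩
    rcases Int.Prime.dvd_mul' (by norm_num) hd with h' | h'
    · norm_num at h'
    · exact_mod_cast h'
  · have hdvd : ((p:ℕ):ℤ) ∣ 6 * C := dvd_trans (Dvd.intro _ rfl) hsq
    rcases Int.Prime.dvd_mul' hp hdvd with h' | h'
    · exfalso
      have h23 : p ∣ 2 * 3 := by exact_mod_cast h'
      rcases (Nat.Prime.dvd_mul hp).1 h23 with hh | hh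
      · have := Nat.le_of_dvd two_pos hh; omega
      · have := Nat.le_of_dvd (by norm_num) hh; omega
    · exact_mod_cast h'

lemma aux_prod_not_dvd (p : ℕ) (hp : p.Prime) [CharP F p]
    (m n : ℤ) (h : ¬ (p:ℤ) ∣ m) :
    ∏ j ∈ Finset.range p, ((m - n - j*m : ℤ) : F) = 0 := by
  haveI : Fact p.Prime := ⟨hp⟩
  have hm : ((m : ℤ) : ZMod p) ≠ 0 := fun hz =>
    h (by exact_mod_cast (ZMod.intCast_zmod_eq_zero_iff_dvd m p).1 hz)
  set u : ZMod p := ((m - n : ℤ) : ZMod p) * ((m : ℤ) : ZMod p)⁻¹ with hu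
  apply Finset.prod_eq_zero (i := u.val) (Finset.mem_range.mpr (ZMod.val_lt u))
  rw [CharP.intCast_eq_zero_iff F p, ← ZMod.intCast_zmod_eq_zero_iff_dvd]
  push_cast
  rw [ZMod.natCast_val, ZMod.cast_id, hu]
  field_simp
  rw [Int.cast_sub, sub_self]

lemma aux_prod_dvd (p : ℕ) (hp : p.Prime) (hp2 : 2 < p) [CharP F p]
    (m n : ℤ) (h : (p:ℤ) ∣ m) :
    ∏ j ∈ Finset.range p, ((m - n - j*m : ℤ) : F) = -((n:ℤ) : F) := by
  have hm : ((m : ℤ) : F) = 0 := by rw [CharP.intCast_eq_zero_iff F p]; exact h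
  have hfac : ∀ j ∈ Finset.range p, ((m - n - j*m : ℤ) : F) = -((n:ℤ) : F) := by
    intro j _
    push_cast
    rw [hm]
    ring
  rw [Finset.prod_congr rfl hfac, Finset.prod_const, Finset.card_range]
  have hodd : Odd p := hp.odd_of_ne_two (by omega)
  rw [hodd.neg_pow]
  haveI : ExpChar F p := ExpChar.prime hp
  have hfrob : ((n:ℤ):F)^p = ((n:ℤ):F) := by
    have h1 := map_intCast (frobenius F p) n
    rwa [frobenius_def] at h1
  rw [hfrob]

lemma aux_cterm (p : ℕ) (hp : p.Prime) (hp2 : 2 < p) [CharP F p]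
    (m n : ℤ) (hcond : m + (n + ((p-1:ℕ):ℤ)*m) = 0) :
    ∏ j ∈ Finset.range (p-1), ((m - n - j*m : ℤ) : F) = 0 := by
  apply Finset.prod_eq_zero (i := 1) (Finset.mem_range.mpr (by omega))
  have hc1 : ((p-1:ℕ):ℤ) = (p:ℤ) - 1 := by omega
  rw [hc1] at hcond
  have hn : m - n - ((1:ℕ):ℤ)*m = (p:ℤ)*m := by push_cast; linarith
  rw [hn, CharP.intCast_eq_zero_iff F p]
  exact Dvd.intro m rfl

end Aux

/-- Let `F` be a field of characteristic `p > 2` and `Vir` the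
Virasoro algebra over `F` (spanned by `{L n : n ∈ ℤ} ∪ {c}` with `c` central
and `[L m, L n] = (m-n)·L (m+n) + (1/2)·C(m+1,3)·δ_{m+n,0}·c`).
If `p ∤ m` then `(ad (L m))^p = 0`, and if `p ∣ m` then
`(ad (L m))^p = ad (L (p·m))`. -/
theorem statement9 (p : ℕ) (hp : p.Prime) (hp2 : 2 < p)
    (F : Type*) [Field F] [CharP F p]
    (Vir : Type*) [LieRing Vir] [LieAlgebra F Vir]
    (L : ℤ → Vir) (c : Vir)
    (hc : ∀ x : Vir, ⁅c, x⁆ = 0)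
    (hbracket : ∀ m n : ℤ, ⁅L m, L n⁆ =
      ((m - n : ℤ) : F) • L (m + n) +
        (if m + n = 0 then (2⁻¹ : F) * ((Ring.choose (m + 1) 3 : ℤ) : F)
          else 0) • c)
    (hspan : Submodule.span F (Set.range L ∪ {c}) = ⊤)
    (m : ℤ) :
    (¬ (p : ℤ) ∣ m → (LieAlgebra.ad F Vir (L m)) ^ p = 0) ∧
      ((p : ℤ) ∣ m →
        (LieAlgebra.ad F Vir (L m)) ^ p = LieAlgebra.ad F Vir (L (p * m))) := by
  have hP : p - 1 + 1 = p := by omega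
  have hLc : ⁅L m, c⁆ = 0 := by rw [← lie_skew, hc, neg_zero]
  have hpowc : ((LieAlgebra.ad F Vir (L m)) ^ p) c = 0 := by
    rw [← hP, pow_succ, Module.End.mul_apply, LieAlgebra.ad_apply, hLc, map_zero]
  constructor
  · intro hnd
    apply LinearMap.ext_on hspan
    intro x hx
    simp only [Set.mem_union, Set.mem_range, Set.mem_singleton_iff] at hx
    rcases hx with ⟨n, rfl⟩ | rfl
    · have hkey := aux_key L c hc hbracket m n (p-1)
      rw [hP] at hkey
      rw [LinearMap.zero_apply, hkey, aux_prod_not_dvd p hp m n hnd, zero_smul, zero_add]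
      by_cases hcond : m + (n + ((p-1:ℕ):ℤ)*m) = 0
      · rw [if_pos hcond, aux_cterm p hp hp2 m n hcond, zero_mul, zero_smul]
      · rw [if_neg hcond, mul_zero, zero_smul]
    · rw [hpowc, LinearMap.zero_apply]
  · intro hd
    apply LinearMap.ext_on hspan
    intro x hx
    simp only [Set.mem_union, Set.mem_range, Set.mem_singleton_iff] at hx
    rcases hx with ⟨n, rfl⟩ | rfl
    · have hkey := aux_key L c hc hbracket m n (p-1)
      rw [hP] at hkey
      rw [hkey, aux_prod_dvd p hp hp2 m n hd, LieAlgebra.ad_apply,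
        hbracket ((p:ℤ)*m) n]
      have hcoef : (((p:ℤ)*m - n : ℤ) : F) = -((n:ℤ) : F) := by
        push_cast
        rw [CharP.cast_eq_zero F p]
        ring
      have hidx : n + (((p-1:ℕ):ℤ)+1)*m = (p:ℤ)*m + n := by
        have h1 : ((p-1:ℕ):ℤ) = (p:ℤ) - 1 := by omega
        rw [h1]; ring
      rw [hcoef, hidx]
      congr 1
      · -- the c-terms
        by_cases hcond : m + (n + ((p-1:ℕ):ℤ)*m) = 0
        · rw [if_pos hcond, aux_cterm p hp hp2 m n hcond, zero_mul, zero_smul]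
          by_cases hcond2 : (p:ℤ)*m + n = 0
          · rw [if_pos hcond2, aux_choose_zero p hp hp2 m hd, mul_zero, zero_smul]
          · rw [if_neg hcond2, zero_smul]
        · rw [if_neg hcond, mul_zero, zero_smul]
          by_cases hcond2 : (p:ℤ)*m + n = 0
          · rw [if_pos hcond2, aux_choose_zero p hp hp2 m hd, mul_zero, zero_smul]
          · rw [if_neg hcond2, zero_smul]
    · rw [hpowc, LieAlgebra.ad_apply, ← lie_skew, hc, neg_zero]
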